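/- Let k > 0 and a < b be real numbers and g ∈ ℂ. Suppose v : ℝ → ℂ is twice differentiable on an open interval containing [a, b], satisfies v''(x) + k²·v(x) = 0 for all x ∈ [a, b], together with −v'(a) − i·k·v(a) = g and v'(b) − i·k·v(b) = 0 (where i is the imaginary unit). Then for every x ∈ [a, b]: v'(x) − i·k·v(x) = 0 and −v'(x) − i·k·v(x) = g·exp(i·k·(x − a)); in particular |−v'(x) − i·k·v(x)| = |g| for all x ∈ [a, b]. -/

import Mathlib

open Complex

private lemma const_of_deriv_zero {a b : ℝ} {f : ℝ → ℂ}
    (hf : ∀ x ∈ Set.Icc a b, HasDerivAt f 0 x) :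
    ∀ x ∈ Set.Icc a b, f x = f a := by
  apply constant_of_has_deriv_right_zero
  · exact fun x hx => (hf x hx).continuousAt.continuousWithinAt
  · exact fun x hx => ((hf x (Set.Ico_subset_Icc_self hx)).hasDerivWithinAt)

private lemma cexp_deriv (c : ℂ) (x : ℝ) :
    HasDerivAt (fun t : ℝ => Complex.exp (c * t)) (c * Complex.exp (c * x)) x := by
  have h1 : HasDerivAt (fun t : ℝ => (c * t : ℂ)) c x := by
    simpa using (Complex.ofRealCLM.hasDerivAt (x := x)).const_mul c
  simpa [mul_comm] using h1.cexp

/-- **Lemma 4.2 (1-d impedance-to-impedance maps).** If `v` is twice differentiable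
(with first derivative `v'` and second derivative `v''`) at every point of `[a,b]`,
satisfies `v'' + k² v = 0` on `[a,b]` together with `−v'(a) − i k v(a) = g` and
`v'(b) − i k v(b) = 0`, then for every `x ∈ [a,b]` the right-facing impedance trace
`v'(x) − i k v(x)` vanishes, the left-facing impedance trace satisfies
`−v'(x) − i k v(x) = g exp(i k (x − a))`, and in particular
`|−v'(x) − i k v(x)| = |g|`. -/
theorem helmholtz_1d_impedance_traces (k a b : ℝ) (hk : 0 < k) (hab : a < b)
    (g : ℂ) (v v' v'' : ℝ → ℂ)
    (hd1 : ∀ x ∈ Set.Icc a b, HasDerivAt v (v' x) x)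
    (hd2 : ∀ x ∈ Set.Icc a b, HasDerivAt v' (v'' x) x)
    (hode : ∀ x ∈ Set.Icc a b, v'' x + (k : ℂ) ^ 2 * v x = 0)
    (hbca : -v' a - Complex.I * k * v a = g)
    (hbcb : v' b - Complex.I * k * v b = 0) :
    ∀ x ∈ Set.Icc a b,
      v' x - Complex.I * k * v x = 0 ∧
      -v' x - Complex.I * k * v x = g * Complex.exp (Complex.I * k * (x - a)) ∧
      ‖-v' x - Complex.I * k * v x‖ = ‖g‖ := by
  -- F x = (v' x - i k v x) * exp(i k x) is constant
  have hF : ∀ x ∈ Set.Icc a b,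
      HasDerivAt (fun t : ℝ => (v' t - Complex.I * k * v t) * Complex.exp (Complex.I * k * t)) 0 x := by
    intro x hx
    have h := ((hd2 x hx).sub ((hd1 x hx).const_mul (Complex.I * (k : ℂ)))).mul
      (cexp_deriv (Complex.I * k) x)
    refine h.congr_deriv ?_
    simp only [Pi.sub_apply]
    linear_combination (Complex.exp (Complex.I * k * x)) * hode x hx -
      ((k : ℂ)^2 * v x * Complex.exp (Complex.I * k * x)) * Complex.I_sq
  have hG : ∀ x ∈ Set.Icc a b,
      HasDerivAt (fun t : ℝ => (-v' t - Complex.I * k * v t) * Complex.exp (-(Complex.I * k) * t)) 0 x := by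
    intro x hx
    have h := (((hd2 x hx).neg).sub ((hd1 x hx).const_mul (Complex.I * (k : ℂ)))).mul
      (cexp_deriv (-(Complex.I * k)) x)
    refine h.congr_deriv ?_
    simp only [Pi.sub_apply, Pi.neg_apply]
    linear_combination (-Complex.exp (-(Complex.I * k) * x)) * hode x hx +
      ((k : ℂ)^2 * v x * Complex.exp (-(Complex.I * k) * x)) * Complex.I_sq
  have hFc := const_of_deriv_zero hF
  have hGc := const_of_deriv_zero hG
  intro x hx
  have ha : a ∈ Set.Icc a b := ⟨le_refl a, le_of_lt hab⟩
  have hb : b ∈ Set.Icc a b := ⟨le_of_lt hab, le_refl b⟩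
  have hFx : (v' x - Complex.I * k * v x) * Complex.exp (Complex.I * k * x) = 0 := by
    have h1 := hFc x hx
    have h2 := hFc b hb
    rw [h1, ← h2]
    simp [hbcb]
  have hexpne : Complex.exp (Complex.I * k * x) ≠ 0 := Complex.exp_ne_zero _
  have h1 : v' x - Complex.I * k * v x = 0 := by
    rcases mul_eq_zero.mp hFx with h | h
    · exact h
    · exact absurd h hexpne
  have hGx : (-v' x - Complex.I * k * v x) * Complex.exp (-(Complex.I * k) * x)
      = g * Complex.exp (-(Complex.I * k) * a) := by
    rw [hGc x hx, hbca]
  have h2 : -v' x - Complex.I * k * v x = g * Complex.exp (Complex.I * k * (x - a)) := by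
    have := congrArg (fun z => z * Complex.exp (Complex.I * k * x)) hGx
    have e0 : (-(Complex.I * k) * (x : ℂ) + Complex.I * k * (x : ℂ)) = 0 := by ring
    rw [mul_assoc, ← Complex.exp_add, e0, Complex.exp_zero, mul_one, mul_assoc g,
      ← Complex.exp_add] at this
    rw [show Complex.I * (k : ℂ) * ((x : ℂ) - (a : ℂ))
        = -(Complex.I * k) * (a : ℂ) + Complex.I * k * (x : ℂ) by ring]
    linear_combination this
  refine ⟨h1, h2, ?_⟩
  rw [h2, norm_mul, Complex.norm_exp]
  have : (Complex.I * k * ((x : ℂ) - a)).re = 0 := by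
    simp [Complex.mul_re, Complex.mul_im]
  rw [this, Real.exp_zero, mul_one]
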